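/- Let n ≥ 1 be an integer and let 0 < a ≤ b be real numbers. Then n·b^{n+1}/a − (n+1)·bⁿ + 2·aⁿ ≥ (n+1)·(2^{1/(n+1)} − 1)·bⁿ, with equality when a = b·2^{−1/(n+1)}. -/

import Mathlib

open Real

/-- For an integer `n ≥ 1` and reals `0 < a ≤ b`,
`n b^{n+1}/a - (n+1) bⁿ + 2aⁿ ≥ (n+1)(2^{1/(n+1)} - 1) bⁿ`, with equality when
`a = b 2^{-1/(n+1)}`. -/
theorem elementary_inequality_f
    (n : ℕ) (hn : 1 ≤ n) (a b : ℝ) (ha : 0 < a) (hab : a ≤ b) :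
    ((n : ℝ) + 1) * ((2:ℝ) ^ (((n:ℝ) + 1))⁻¹ - 1) * b ^ n ≤
        (n : ℝ) * b ^ (n + 1) / a - ((n : ℝ) + 1) * b ^ n + 2 * a ^ n ∧
      (a = b * (2:ℝ) ^ (-(((n:ℝ) + 1))⁻¹) →
        (n : ℝ) * b ^ (n + 1) / a - ((n : ℝ) + 1) * b ^ n + 2 * a ^ n =
          ((n : ℝ) + 1) * ((2:ℝ) ^ (((n:ℝ) + 1))⁻¹ - 1) * b ^ n) := by
  have hb : 0 < b := lt_of_lt_of_le ha hab
  set c : ℝ := (n:ℝ) + 1 with hcdef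
  have hc : 0 < c := by positivity
  set w1 : ℝ := (n:ℝ) / c with hw1def
  set w2 : ℝ := c⁻¹ with hw2def
  have hw1 : 0 ≤ w1 := by positivity
  have hw2 : 0 ≤ w2 := by positivity
  have hsum : w1 + w2 = 1 := by rw [hw1def, hw2def, inv_eq_one_div, ← add_div, div_eq_one_iff_eq hc.ne', hcdef]
  have hcw1 : c * w1 = (n:ℝ) := by rw [hw1def]; exact mul_div_cancel₀ _ hc.ne'
  have hcw2 : c * w2 = 1 := by rw [hw2def]; exact mul_inv_cancel₀ hc.ne'
  have hAM := Real.geom_mean_le_arith_mean2_weighted hw1 hw2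
    (p₁ := b ^ (n+1) / a) (p₂ := 2 * a ^ n) (by positivity) (by positivity) hsum
  have h1 : (b ^ (n+1) / a) ^ w1 = b ^ (n:ℝ) / a ^ w1 := by
    rw [div_rpow (by positivity) ha.le, ← rpow_natCast b (n+1), ← rpow_mul hb.le]
    congr 1
    push_cast
    rw [← hcdef, hcw1]
  have h2 : (2 * a ^ n) ^ w2 = 2 ^ w2 * a ^ ((n:ℝ) * w2) := by
    rw [mul_rpow (by norm_num) (by positivity), ← rpow_natCast a n, ← rpow_mul ha.le]
  have hprod : (b ^ (n+1) / a) ^ w1 * (2 * a ^ n) ^ w2 = 2 ^ w2 * b ^ n := by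
    rw [h1, h2]
    have hexp : (n:ℝ) * w2 = w1 := by
      rw [hw1def, hw2def, div_eq_mul_inv]
    rw [hexp, rpow_natCast]
    have hne : a ^ w1 ≠ 0 := by positivity
    field_simp
    try ring
  rw [hprod] at hAM
  have key : c * 2 ^ w2 * b ^ n ≤ (n:ℝ) * (b ^ (n+1) / a) + 2 * a ^ n := by
    calc c * 2 ^ w2 * b ^ n = c * (2 ^ w2 * b ^ n) := by ring
      _ ≤ c * (w1 * (b ^ (n+1) / a) + w2 * (2 * a ^ n)) :=
          mul_le_mul_of_nonneg_left hAM hc.le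
      _ = (c * w1) * (b ^ (n+1) / a) + (c * w2) * (2 * a ^ n) := by ring
      _ = (n:ℝ) * (b ^ (n+1) / a) + 2 * a ^ n := by rw [hcw1, hcw2]; ring
  constructor
  · rw [mul_div_assoc,
      show c * ((2:ℝ) ^ w2 - 1) * b ^ n = c * 2 ^ w2 * b ^ n - c * b ^ n from by ring]
    linarith [key]
  · intro hEq
    subst hEq
    have ht : (0:ℝ) < (2:ℝ) ^ (-w2) := by positivity
    have htn : ((2:ℝ) ^ (-w2)) ^ n = (2:ℝ) ^ (-w2 * (n:ℝ)) := by
      rw [← rpow_natCast ((2:ℝ) ^ (-w2)) n, ← rpow_mul (by norm_num)]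
    have hpow : (b * (2:ℝ) ^ (-w2)) ^ n = b ^ n * (2:ℝ) ^ (-w2 * (n:ℝ)) := by
      rw [mul_pow, htn]
    have hdiv : (n:ℝ) * b ^ (n+1) / (b * (2:ℝ) ^ (-w2))
        = (n:ℝ) * b ^ n * (2:ℝ) ^ w2 := by
      have h2w : (2:ℝ) ^ w2 * (2:ℝ) ^ (-w2) = 1 := by
        rw [← rpow_add (by norm_num)]; simp
      rw [div_eq_iff (by positivity)]
      calc (n:ℝ) * b ^ (n+1)
          = ((n:ℝ) * (b ^ n * b)) * ((2:ℝ) ^ w2 * (2:ℝ) ^ (-w2)) := by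
            rw [h2w, pow_succ]; ring
        _ = (n:ℝ) * b ^ n * (2:ℝ) ^ w2 * (b * (2:ℝ) ^ (-w2)) := by ring
    rw [hdiv, hpow]
    have h2' : 2 * (2:ℝ) ^ (-w2 * (n:ℝ)) = (2:ℝ) ^ w2 := by
      nth_rewrite 1 [show (2:ℝ) = (2:ℝ) ^ (1:ℝ) from (rpow_one 2).symm]
      rw [← rpow_add (by norm_num)]
      congr 1
      rw [hw2def]
      field_simp
      ring
    calc (n:ℝ) * b ^ n * (2:ℝ) ^ w2 - c * b ^ n + 2 * (b ^ n * (2:ℝ) ^ (-w2 * (n:ℝ)))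
        = (n:ℝ) * b ^ n * (2:ℝ) ^ w2 - c * b ^ n + (2 * (2:ℝ) ^ (-w2 * (n:ℝ))) * b ^ n := by ring
      _ = (n:ℝ) * b ^ n * (2:ℝ) ^ w2 - c * b ^ n + (2:ℝ) ^ w2 * b ^ n := by rw [h2']
      _ = c * ((2:ℝ) ^ w2 - 1) * b ^ n := by rw [hcdef]; ring
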